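/- arXiv:2403.04289 — 4 statements merged into one kernel-verified Lean document; each statement's English description precedes it below -/
import Mathlib

section
/- For integers 0 ≤ k < l ≤ ⌊n/2⌋ and integer q ≥ 2, the Gaussian binomial coefficients satisfy the strict unimodality inequality [n choose k]_q < [n choose l]_q. -/
noncomputable def gaussBinom (q n k : ℕ) : ℚ :=
  ∏ i ∈ Finset.range k, ((q : ℚ) ^ (n - i) - 1) / ((q : ℚ) ^ (k - i) - 1)

lemma gaussBinom_eq (q n j : ℕ) :
    gaussBinom q n j = (∏ i ∈ Finset.range j, ((q : ℚ) ^ (n - i) - 1)) /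
      (∏ i ∈ Finset.range j, ((q : ℚ) ^ (i + 1) - 1)) := by
  rw [gaussBinom, Finset.prod_div_distrib]
  congr 1
  rw [← Finset.prod_range_reflect (fun i => ((q : ℚ) ^ (i + 1) - 1)) j]
  apply Finset.prod_congr rfl
  intro i hi
  simp only [Finset.mem_range] at hi
  congr 2
  omega

lemma one_lt_qpow (q e : ℕ) (hq : 2 ≤ q) (he : 1 ≤ e) : (1 : ℚ) < (q : ℚ) ^ e := by
  have h1 : (1 : ℚ) < (q : ℚ) := by exact_mod_cast hq
  exact one_lt_pow₀ h1 (by omega)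

lemma gaussBinom_pos (q n j : ℕ) (hq : 2 ≤ q) (hj : j ≤ n) :
    0 < gaussBinom q n j := by
  rw [gaussBinom_eq]
  apply div_pos
  · apply Finset.prod_pos
    intro i hi
    simp only [Finset.mem_range] at hi
    have := one_lt_qpow q (n - i) hq (by omega)
    linarith
  · apply Finset.prod_pos
    intro i hi
    have := one_lt_qpow q (i + 1) hq (by omega)
    linarith

lemma gaussBinom_succ (q n m : ℕ) :
    gaussBinom q n (m + 1) = gaussBinom q n m *
      (((q : ℚ) ^ (n - m) - 1) / ((q : ℚ) ^ (m + 1) - 1)) := by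
  rw [gaussBinom_eq, gaussBinom_eq, Finset.prod_range_succ, Finset.prod_range_succ,
    div_mul_div_comm]

lemma gaussBinom_step (q n m : ℕ) (hq : 2 ≤ q) (hm : m + 1 ≤ n / 2) :
    gaussBinom q n m < gaussBinom q n (m + 1) := by
  have hpos := gaussBinom_pos q n m hq (by omega)
  rw [gaussBinom_succ]
  have h1 : (1 : ℚ) < (q : ℚ) := by exact_mod_cast hq
  have hden : (1 : ℚ) < (q : ℚ) ^ (m + 1) := one_lt_qpow q (m + 1) hq (by omega)
  have hlt : (q : ℚ) ^ (m + 1) < (q : ℚ) ^ (n - m) :=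
    pow_lt_pow_right₀ h1 (by omega)
  have hr : (1 : ℚ) < ((q : ℚ) ^ (n - m) - 1) / ((q : ℚ) ^ (m + 1) - 1) := by
    rw [one_lt_div (by linarith)]
    linarith
  exact lt_mul_of_one_lt_right hpos hr

theorem gaussBinom_strict_unimodal (q n k l : ℕ) (hq : 2 ≤ q)
    (hkl : k < l) (hl : l ≤ n / 2) :
    gaussBinom q n k < gaussBinom q n l := by
  induction l with
  | zero => omega
  | succ m ih =>
    have hstep := gaussBinom_step q n m hq hl
    rcases Nat.lt_succ_iff_lt_or_eq.mp hkl with h | h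
    · exact (ih h (by omega)).trans hstep
    · subst h; exact hstep
end

section
/- Suppose 1 ≤ k ≤ ⌊n/2⌋ and f₁, ..., f_{⌊n/2⌋} are nonnegative real numbers satisfying ∑_{j=1}^{⌊n/2⌋} f_j / [n-1 choose j-1]_q ≤ k and f_i ≤ [n-1 choose i-1]_q for each 1 ≤ i ≤ ⌊n/2⌋. Then ∑_{j=1}^{⌊n/2⌋} f_j ≤ ∑_{j=⌊n/2⌋-k+1}^{⌊n/2⌋} [n-1 choose j-1]_q. -/
lemma gb_pos {q N r : ℕ} (hq : 2 ≤ q) (h : r ≤ N) : 0 < gaussBinom q N r := by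
  have hq1 : (1:ℚ) < q := by exact_mod_cast lt_of_lt_of_le one_lt_two (by exact_mod_cast hq)
  apply Finset.prod_pos
  intro i hi
  have hi' : i < r := Finset.mem_range.mp hi
  have h1 : (1:ℚ) < (q:ℚ) ^ (N - i) := one_lt_pow₀ hq1 (by omega)
  have h2 : (1:ℚ) < (q:ℚ) ^ (r - i) := one_lt_pow₀ hq1 (by omega)
  exact div_pos (by linarith) (by linarith)

lemma gb_eq (q N r : ℕ) : gaussBinom q N r =
    (∏ i ∈ Finset.range r, ((q:ℚ)^(N-i)-1)) / (∏ i ∈ Finset.range r, ((q:ℚ)^(i+1)-1)) := by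
  rw [gaussBinom, Finset.prod_div_distrib]
  congr 1
  rw [← Finset.prod_range_reflect (fun i => ((q:ℚ)^(i+1)-1)) r]
  apply Finset.prod_congr rfl
  intro i hi
  have : i < r := Finset.mem_range.mp hi
  congr 2
  omega

lemma gb_mono {q N r : ℕ} (hq : 2 ≤ q) (h : 2*r+1 ≤ N) :
    gaussBinom q N r ≤ gaussBinom q N (r+1) := by
  have hq1 : (1:ℚ) < q := by exact_mod_cast lt_of_lt_of_le one_lt_two (by exact_mod_cast hq)
  rw [gb_eq, gb_eq, Finset.prod_range_succ, Finset.prod_range_succ,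
    mul_div_mul_comm]
  have hpos : 0 < gaussBinom q N r := gb_pos hq (by omega)
  rw [gb_eq] at hpos
  have hc2 : (1:ℚ) < (q:ℚ)^(r+1) := one_lt_pow₀ hq1 (by omega)
  have hc1 : (q:ℚ)^(r+1) ≤ (q:ℚ)^(N-r) := pow_le_pow_right₀ hq1.le (by omega)
  nth_rewrite 1 [← mul_one ((∏ i ∈ Finset.range r, ((q:ℚ)^(N-i)-1)) / _)]
  apply mul_le_mul_of_nonneg_left _ hpos.le
  rw [le_div_iff₀ (by linarith)]
  linarith

lemma gb_chain {q N : ℕ} (hq : 2 ≤ q) (i j : ℕ) (hij : i ≤ j) (hj : 2*j ≤ N+1) :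
    gaussBinom q N i ≤ gaussBinom q N j := by
  induction j, hij using Nat.le_induction with
  | base => exact le_refl _
  | succ j hij ih =>
      exact le_trans (ih (by omega)) (gb_mono hq (by omega))

theorem sum_le_top_levels (q n k : ℕ) (hq : 2 ≤ q) (hk : 1 ≤ k) (hkn : k ≤ n / 2)
    (f : ℕ → ℝ) (hf : ∀ j ∈ Finset.Icc 1 (n / 2), 0 ≤ f j)
    (hLYM : ∑ j ∈ Finset.Icc 1 (n / 2),
        f j / ((gaussBinom q (n - 1) (j - 1) : ℚ) : ℝ) ≤ (k : ℝ))
    (hbd : ∀ i ∈ Finset.Icc 1 (n / 2),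
        f i ≤ ((gaussBinom q (n - 1) (i - 1) : ℚ) : ℝ)) :
    ∑ j ∈ Finset.Icc 1 (n / 2), f j ≤
      ∑ j ∈ Finset.Icc (n / 2 - k + 1) (n / 2),
        ((gaussBinom q (n - 1) (j - 1) : ℚ) : ℝ) := by
  set m := n / 2 with hm
  set B : ℕ → ℝ := fun j => ((gaussBinom q (n - 1) (j - 1) : ℚ) : ℝ) with hB
  have hn2 : 2 ≤ n := by omega
  have hkm : k ≤ m := hkn
  have heq1 : Finset.Icc 1 m = Finset.Ioc 0 m := (Finset.Icc_add_one_left_eq_Ioc 0 m)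
  have heq2 : Finset.Icc (m - k + 1) m = Finset.Ioc (m - k) m := (Finset.Icc_add_one_left_eq_Ioc (m-k) m)
  rw [heq1] at hLYM hf hbd ⊢
  rw [heq2]
  have hBpos : ∀ j ∈ Finset.Ioc 0 m, (0:ℝ) < B j := by
    intro j hj
    rw [Finset.mem_Ioc] at hj
    have : (0:ℚ) < gaussBinom q (n-1) (j-1) := gb_pos hq (by omega)
    show (0:ℝ) < ((gaussBinom q (n - 1) (j - 1) : ℚ) : ℝ)
    exact_mod_cast this
  have hBmono : ∀ i j, 0 < i → i ≤ j → j ≤ m → B i ≤ B j := by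
    intro i j hi hij hj
    have : gaussBinom q (n-1) (i-1) ≤ gaussBinom q (n-1) (j-1) :=
      gb_chain hq _ _ (by omega) (by omega)
    show ((gaussBinom q (n - 1) (i - 1) : ℚ) : ℝ) ≤ ((gaussBinom q (n - 1) (j - 1) : ℚ) : ℝ)
    exact_mod_cast this
  -- the x values
  set x : ℕ → ℝ := fun j => f j / B j with hx
  have hfx : ∀ j ∈ Finset.Ioc 0 m, f j = B j * x j := by
    intro j hj
    simp only [hx]
    field_simp [(hBpos j hj).ne']
  have hx0 : ∀ j ∈ Finset.Ioc 0 m, 0 ≤ x j := fun j hj =>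
    div_nonneg (hf j hj) (hBpos j hj).le
  have hx1 : ∀ j ∈ Finset.Ioc 0 m, x j ≤ 1 := fun j hj =>
    (div_le_one (hBpos j hj)).mpr (hbd j hj)
  have hsub1 : Finset.Ioc 0 (m - k) ⊆ Finset.Ioc 0 m := Finset.Ioc_subset_Ioc_right (by omega)
  have hsub2 : Finset.Ioc (m - k) m ⊆ Finset.Ioc 0 m := Finset.Ioc_subset_Ioc_left (by omega)
  have hsplitf : ∑ j ∈ Finset.Ioc 0 (m-k), f j + ∑ j ∈ Finset.Ioc (m-k) m, f j
      = ∑ j ∈ Finset.Ioc 0 m, f j :=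
    Finset.sum_Ioc_consecutive _ (Nat.zero_le _) (Nat.sub_le _ _)
  have hsplitx : ∑ j ∈ Finset.Ioc 0 (m-k), x j + ∑ j ∈ Finset.Ioc (m-k) m, x j
      = ∑ j ∈ Finset.Ioc 0 m, x j :=
    Finset.sum_Ioc_consecutive _ (Nat.zero_le _) (Nat.sub_le _ _)
  have hLYM' : ∑ j ∈ Finset.Ioc 0 m, x j ≤ (k : ℝ) := hLYM
  have hcard : (Finset.Ioc (m-k) m).card = k := by
    rw [Nat.card_Ioc]; omega
  rcases Nat.eq_zero_or_pos (m - k) with h0 | h0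
  · rw [h0]
    rw [h0, Finset.Ioc_self, Finset.sum_empty] at hsplitf
    rw [← hsplitf, zero_add]
    exact Finset.sum_le_sum hbd
  · set C := B (m - k) with hC
    have hmkmem : m - k ∈ Finset.Ioc 0 m := Finset.mem_Ioc.mpr ⟨h0, Nat.sub_le _ _⟩
    have hCpos : 0 < C := hBpos _ hmkmem
    have key1 : ∑ j ∈ Finset.Ioc 0 (m-k), f j ≤ C * ∑ j ∈ Finset.Ioc 0 (m-k), x j := by
      rw [Finset.mul_sum]
      apply Finset.sum_le_sum
      intro j hj
      have hj' := hsub1 hj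
      rw [hfx j hj']
      exact mul_le_mul_of_nonneg_right
        (hBmono j (m-k) (Finset.mem_Ioc.mp hj).1 (Finset.mem_Ioc.mp hj).2 (Nat.sub_le _ _))
        (hx0 j hj')
    have key2 : C * ∑ j ∈ Finset.Ioc (m-k) m, (1 - x j)
        ≤ ∑ j ∈ Finset.Ioc (m-k) m, (B j - f j) := by
      rw [Finset.mul_sum]
      apply Finset.sum_le_sum
      intro j hj
      have hj' := hsub2 hj
      have h1 : C * (1 - x j) ≤ B j * (1 - x j) :=
        mul_le_mul_of_nonneg_right
          (hBmono (m-k) j h0 (Finset.mem_Ioc.mp hj).1.le (Finset.mem_Ioc.mp hj).2)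
          (by linarith [hx1 j hj'])
      have h2 : B j * (1 - x j) = B j - f j := by
        rw [hfx j hj']; ring
      linarith
    have key3 : ∑ j ∈ Finset.Ioc 0 (m-k), x j ≤ ∑ j ∈ Finset.Ioc (m-k) m, (1 - x j) := by
      rw [Finset.sum_sub_distrib, Finset.sum_const, hcard, nsmul_eq_mul, mul_one]
      linarith [hsplitx, hLYM']
    have key4 : C * ∑ j ∈ Finset.Ioc 0 (m-k), x j ≤ C * ∑ j ∈ Finset.Ioc (m-k) m, (1 - x j) :=
      mul_le_mul_of_nonneg_left key3 hCpos.le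
    have hsum2 : ∑ j ∈ Finset.Ioc (m-k) m, (B j - f j)
        = ∑ j ∈ Finset.Ioc (m-k) m, B j - ∑ j ∈ Finset.Ioc (m-k) m, f j :=
      Finset.sum_sub_distrib _ _
    calc ∑ j ∈ Finset.Ioc 0 m, f j
        = ∑ j ∈ Finset.Ioc 0 (m-k), f j + ∑ j ∈ Finset.Ioc (m-k) m, f j := hsplitf.symm
      _ ≤ ∑ j ∈ Finset.Ioc (m-k) m, B j := by linarith
end

section
/- For 0 ≤ i ≤ n, the double-counting identity [n choose i]_q · t_i = α(q,n) · C(n,i) holds, where α(q,n) = (q^n-1)(q^n-q)···(q^n-q^{n-1})/n! is the number of bases of F_q^n, t_i = (q^i-1)···(q^i-q^{i-1})(q^n-q^i)···(q^n-q^{n-1})/(i!(n-i)!), [n choose i]_q is the Gaussian binomial coefficient, and C(n,i) is the ordinary binomial coefficient. -/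
lemma gaussBinom_mul_prod (q n i : ℕ) (hq : 2 ≤ q) (hi : i ≤ n) :
    gaussBinom q n i * (∏ j ∈ Finset.range i, ((q : ℚ) ^ i - (q : ℚ) ^ j)) =
      ∏ j ∈ Finset.range i, ((q : ℚ) ^ n - (q : ℚ) ^ j) := by
  rw [gaussBinom, ← Finset.prod_mul_distrib]
  refine Finset.prod_congr rfl fun j hj => ?_
  rw [Finset.mem_range] at hj
  have hqQ : (1 : ℚ) < (q : ℚ) := by exact_mod_cast hq
  have h1 : ((q : ℚ) ^ (i - j) - 1) ≠ 0 := by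
    have : (1 : ℚ) < (q : ℚ) ^ (i - j) := one_lt_pow₀ hqQ (by omega)
    linarith
  have hi' : (q : ℚ) ^ i - (q : ℚ) ^ j = (q : ℚ) ^ j * ((q : ℚ) ^ (i - j) - 1) := by
    rw [mul_sub, mul_one, ← pow_add]
    congr 2
    omega
  have hn' : (q : ℚ) ^ n - (q : ℚ) ^ j = (q : ℚ) ^ j * ((q : ℚ) ^ (n - j) - 1) := by
    rw [mul_sub, mul_one, ← pow_add]
    congr 2
    omega
  rw [hi', hn']
  field_simp

/-- The double-counting identity `[n choose i]_q · t_i = α(q,n) · C(n,i)`. -/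
theorem gaussBinom_mul_t_eq (q n i : ℕ) (hq : 2 ≤ q) (hi : i ≤ n) :
    gaussBinom q n i *
      ((∏ j ∈ Finset.range i, ((q : ℚ) ^ i - (q : ℚ) ^ j)) *
        (∏ j ∈ Finset.Ico i n, ((q : ℚ) ^ n - (q : ℚ) ^ j)) /
        ((i.factorial : ℚ) * ((n - i).factorial : ℚ))) =
      ((∏ j ∈ Finset.range n, ((q : ℚ) ^ n - (q : ℚ) ^ j)) / (n.factorial : ℚ)) *
        (n.choose i : ℚ) := by
  have hsplit : (∏ j ∈ Finset.range n, ((q : ℚ) ^ n - (q : ℚ) ^ j)) =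
      (∏ j ∈ Finset.range i, ((q : ℚ) ^ n - (q : ℚ) ^ j)) *
        ∏ j ∈ Finset.Ico i n, ((q : ℚ) ^ n - (q : ℚ) ^ j) :=
    (Finset.prod_range_mul_prod_Ico _ hi).symm
  have hfac : (n.choose i : ℚ) * (i.factorial : ℚ) * ((n - i).factorial : ℚ) =
      (n.factorial : ℚ) := by
    exact_mod_cast congrArg (Nat.cast : ℕ → ℚ)
      (Nat.choose_mul_factorial_mul_factorial hi)
  have h1 : (i.factorial : ℚ) ≠ 0 := Nat.cast_ne_zero.mpr i.factorial_ne_zero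
  have h2 : ((n - i).factorial : ℚ) ≠ 0 := Nat.cast_ne_zero.mpr (n - i).factorial_ne_zero
  have h3 : (n.factorial : ℚ) ≠ 0 := Nat.cast_ne_zero.mpr n.factorial_ne_zero
  rw [hsplit, mul_div_assoc', ← mul_assoc, gaussBinom_mul_prod q n i hq hi]
  rw [div_mul_eq_mul_div, div_eq_div_iff (by positivity) h3, ← hfac]
  ring
end

section
/- Fix an integer k ≥ 1, q ≥ 2, and a real constant c with 0 < c ≤ 1. Suppose P is a hereditary property of families of k-dimensional subspaces of F_q^n such that every family of k-subsets of [n] with property P (under the Boolean-lattice embedding) has size at most c·C(n,k). Then every family of k-dimensional subspaces of F_q^n with property P has size at most c·[n choose k]_q. -/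
open Finset

section Aux

variable {F : Type*} [Field F] [Fintype F] {n k : ℕ}

/-- For two linearly independent tuples (of the same finite index type) in `F^n`, there is
a linear automorphism carrying one to the other. -/
lemma exists_linearEquiv_comp_eq {m : Type*} [Fintype m]
    {g g' : m → (Fin n → F)} (hg : LinearIndependent F g) (hg' : LinearIndependent F g') :
    ∃ φ : (Fin n → F) ≃ₗ[F] (Fin n → F), ∀ i, φ (g i) = g' i := by
  classical
  set s := Submodule.span F (Set.range g) with hsdef
  set s' := Submodule.span F (Set.range g') with hs'def
  obtain ⟨c, hc⟩ := Submodule.exists_isCompl s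
  obtain ⟨c', hc'⟩ := Submodule.exists_isCompl s'
  have hfr : Module.finrank F c = Module.finrank F c' := by
    have h1 := Submodule.finrank_add_eq_of_isCompl hc
    have h2 := Submodule.finrank_add_eq_of_isCompl hc'
    have e1 : Module.finrank F s = Fintype.card m := finrank_span_eq_card hg
    have e2 : Module.finrank F s' = Fintype.card m := finrank_span_eq_card hg'
    omega
  let bg : Module.Basis m F s := Module.Basis.span hg
  let bg' : Module.Basis m F s' := Module.Basis.span hg'
  let e1 : s ≃ₗ[F] s' := bg.equiv bg' (Equiv.refl m)
  let e2 : c ≃ₗ[F] c' := LinearEquiv.ofFinrankEq _ _ hfr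
  refine ⟨(Submodule.prodEquivOfIsCompl s c hc).symm.trans
    ((e1.prodCongr e2).trans (Submodule.prodEquivOfIsCompl s' c' hc')), fun i => ?_⟩
  have hgi : g i ∈ s := Submodule.subset_span (Set.mem_range_self i)
  have h0 : (Submodule.prodEquivOfIsCompl s c hc).symm (g i) = ((⟨g i, hgi⟩ : ↥s), (0 : ↥c)) :=
    Submodule.prodEquivOfIsCompl_symm_apply_left (p := s) (q := c) hc ⟨g i, hgi⟩
  have hb : (⟨g i, hgi⟩ : ↥s) = bg i := by
    apply Subtype.ext
    exact congrArg Subtype.val (Module.Basis.span_apply hg i).symm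
  simp only [LinearEquiv.trans_apply, h0, hb]
  have h3 : (e1.prodCongr e2) (bg i, 0) = (bg' i, 0) := by
    have he1 : e1 (bg i) = bg' i := by
      simp [e1, Module.Basis.equiv_apply]
    have he2 : e2 (0 : ↥c) = 0 := map_zero e2
    rw [LinearEquiv.prodCongr_apply]
    exact Prod.ext he1 he2
  rw [h3]
  have : ((bg' i : s') : Fin n → F) = g' i := congrArg Subtype.val (Module.Basis.span_apply hg' i)
  simp [Submodule.coe_prodEquivOfIsCompl', this]

/-- The number of ways to extend an independent `k`-tuple to an independent `n`-tuple does not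
depend on the tuple. -/
lemma card_ext_eq {g g' : Fin k → (Fin n → F)} (hg : LinearIndependent F g)
    (hg' : LinearIndependent F g') :
    Nat.card {h : Fin (n - k) → (Fin n → F) // LinearIndependent F (Sum.elim g h)} =
    Nat.card {h : Fin (n - k) → (Fin n → F) // LinearIndependent F (Sum.elim g' h)} := by
  obtain ⟨φ, hφ⟩ := exists_linearEquiv_comp_eq hg hg'
  have hφ' : ∀ i, φ.symm (g' i) = g i := fun i => by rw [← hφ, LinearEquiv.symm_apply_apply]
  refine Nat.card_congr ⟨fun h => ⟨fun j => φ (h.1 j), ?_⟩, fun h => ⟨fun j => φ.symm (h.1 j), ?_⟩,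
    fun h => ?_, fun h => ?_⟩
  · have hcomp : Sum.elim g' (fun j => φ (h.1 j)) = ⇑(φ.toLinearMap) ∘ Sum.elim g h.1 :=
      funext fun x => by cases x <;> simp [hφ]
    rw [hcomp]
    exact h.2.map' φ.toLinearMap φ.ker
  · have hcomp : Sum.elim g (fun j => φ.symm (h.1 j)) =
        ⇑(φ.symm.toLinearMap) ∘ Sum.elim g' h.1 :=
      funext fun x => by cases x <;> simp [hφ']
    rw [hcomp]
    exact h.2.map' φ.symm.toLinearMap φ.symm.ker
  · apply Subtype.ext; funext j; simp
  · apply Subtype.ext; funext j; simp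

/-- Decomposition count: bases whose `S`-indexed part lies in `W`. -/
lemma card_cond_eq (W : Submodule F (Fin n → F)) {S : Finset (Fin n)} (hS : S.card = k)
    {g₀ : Fin k → (Fin n → F)} (hg₀ : LinearIndependent F g₀) :
    Nat.card {b : Fin n → (Fin n → F) // LinearIndependent F b ∧ ∀ i ∈ S, b i ∈ W} =
    Nat.card {g : Fin k → (Fin n → F) // LinearIndependent F g ∧ ∀ j, g j ∈ W} *
    Nat.card {h : Fin (n - k) → (Fin n → F) // LinearIndependent F (Sum.elim g₀ h)} := by
  classical
  have hSc : (Sᶜ : Finset (Fin n)).card = n - k := by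
    rw [Finset.card_compl, hS]; simp
  let e1 : Fin k ≃ ↥S := (finCongr hS.symm).trans S.equivFin.symm
  let e2 : Fin (n - k) ≃ ↥(Sᶜ : Finset (Fin n)) := (finCongr hSc.symm).trans (Sᶜ).equivFin.symm
  let e2' : ↥(Sᶜ : Finset (Fin n)) ≃ ↥((↑S : Set (Fin n))ᶜ) :=
    Equiv.subtypeEquivRight (by simp)
  let e : (Fin k ⊕ Fin (n - k)) ≃ Fin n :=
    (Equiv.sumCongr e1 (e2.trans e2')).trans (Equiv.Set.sumCompl (↑S : Set (Fin n)))
  have heS : ∀ j, e (Sum.inl j) ∈ S := fun j => by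
    have h : e (Sum.inl j) = ((e1 j : Fin n)) :=
      Equiv.Set.sumCompl_apply_inl (↑S : Set (Fin n)) (e1 j)
    rw [h]
    exact (e1 j).2
  have heS' : ∀ i ∈ S, ∃ j, e (Sum.inl j) = i := fun i hi => by
    refine ⟨e1.symm ⟨i, hi⟩, ?_⟩
    have h : ∀ j, e (Sum.inl j) = ((e1 j : Fin n)) := fun j =>
      Equiv.Set.sumCompl_apply_inl (↑S : Set (Fin n)) (e1 j)
    rw [h, Equiv.apply_symm_apply]
  -- step 1 : reindex along e
  let E1 : {b : Fin n → (Fin n → F) // LinearIndependent F b ∧ ∀ i ∈ S, b i ∈ W} ≃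
      {p : (Fin k ⊕ Fin (n - k)) → (Fin n → F) //
        LinearIndependent F p ∧ ∀ j, p (Sum.inl j) ∈ W} :=
    { toFun := fun b => ⟨b.1 ∘ e, (linearIndependent_equiv e).mpr b.2.1,
        fun j => b.2.2 _ (heS j)⟩
      invFun := fun p => ⟨p.1 ∘ e.symm, (linearIndependent_equiv e.symm).mpr p.2.1,
        fun i hi => by
          obtain ⟨j, hj⟩ := heS' i hi
          have : e.symm i = Sum.inl j := by rw [← hj, Equiv.symm_apply_apply]
          simpa [this] using p.2.2 j⟩
      left_inv := fun b => by
        apply Subtype.ext; funext i; simp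
      right_inv := fun p => by
        apply Subtype.ext; funext x; simp }
  -- step 2 : split into head and tail
  let E2 : {p : (Fin k ⊕ Fin (n - k)) → (Fin n → F) //
        LinearIndependent F p ∧ ∀ j, p (Sum.inl j) ∈ W} ≃
      Σ g : {g : Fin k → (Fin n → F) // LinearIndependent F g ∧ ∀ j, g j ∈ W},
        {h : Fin (n - k) → (Fin n → F) // LinearIndependent F (Sum.elim g.1 h)} :=
    { toFun := fun p => ⟨⟨p.1 ∘ Sum.inl, p.2.1.comp Sum.inl Sum.inl_injective, p.2.2⟩,
        ⟨p.1 ∘ Sum.inr, by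
          have : Sum.elim (p.1 ∘ Sum.inl) (p.1 ∘ Sum.inr) = p.1 :=
            funext fun x => by cases x <;> rfl
          rw [this]; exact p.2.1⟩⟩
      invFun := fun gh => ⟨Sum.elim gh.1.1 gh.2.1, gh.2.2, fun j => gh.1.2.2 j⟩
      left_inv := fun p => by
        apply Subtype.ext; funext x; cases x <;> rfl
      right_inv := fun gh => rfl }
  rw [Nat.card_congr (E1.trans E2)]
  rw [Nat.card_eq_fintype_card, Fintype.card_sigma]
  have hconst : ∀ g : {g : Fin k → (Fin n → F) // LinearIndependent F g ∧ ∀ j, g j ∈ W},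
      Fintype.card {h : Fin (n - k) → (Fin n → F) // LinearIndependent F (Sum.elim g.1 h)} =
      Nat.card {h : Fin (n - k) → (Fin n → F) // LinearIndependent F (Sum.elim g₀ h)} := by
    intro g
    rw [← Nat.card_eq_fintype_card]
    exact card_ext_eq g.2.1 hg₀
  rw [Finset.sum_congr rfl (fun g _ => hconst g), Finset.sum_const, Finset.card_univ,
    smul_eq_mul]
  simp [Nat.card_eq_fintype_card]

/-- Counting independent `k`-tuples inside a `k`-dimensional subspace. -/
lemma card_tuples_in (W : Submodule F (Fin n → F)) (hW : Module.finrank F ↥W = k) :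
    Nat.card {g : Fin k → (Fin n → F) // LinearIndependent F g ∧ ∀ j, g j ∈ W} =
    ∏ i ∈ range k, (Fintype.card F ^ k - Fintype.card F ^ i) := by
  classical
  let E : {g : Fin k → (Fin n → F) // LinearIndependent F g ∧ ∀ j, g j ∈ W} ≃
      {g : Fin k → ↥W // LinearIndependent F g} :=
    { toFun := fun g => ⟨fun j => ⟨g.1 j, g.2.2 j⟩, by
        apply LinearIndependent.of_comp W.subtype
        exact g.2.1⟩
      invFun := fun g => ⟨fun j => (g.1 j : Fin n → F),
        g.2.map' W.subtype W.ker_subtype, fun j => (g.1 j).2⟩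
      left_inv := fun g => rfl
      right_inv := fun g => rfl }
  rw [Nat.card_congr E, card_linearIndependent (le_of_eq hW.symm)]
  rw [hW, ← Fin.prod_univ_eq_prod_range]

/-- Uniqueness of the index set witnessing containment. -/
lemma finset_unique_of (W : Submodule F (Fin n → F)) (hW : Module.finrank F ↥W = k)
    {b : Fin n → (Fin n → F)} (hb : LinearIndependent F b) {S S' : Finset (Fin n)}
    (hS : S.card = k) (hS' : S'.card = k) (h1 : ∀ i ∈ S, b i ∈ W) (h2 : ∀ i ∈ S', b i ∈ W) :
    S = S' := by
  classical
  have key : ∀ U : Finset (Fin n), (∀ i ∈ U, b i ∈ W) → U.card ≤ k := by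
    intro U hU
    have hind : LinearIndependent F (b ∘ (fun x : ↥U => (x : Fin n))) :=
      hb.comp _ Subtype.val_injective
    have hsp : Submodule.span F (Set.range (b ∘ (fun x : ↥U => (x : Fin n)))) ≤ W := by
      rw [Submodule.span_le]; rintro _ ⟨x, rfl⟩; exact hU x x.2
    have hmono := Submodule.finrank_mono hsp
    rw [finrank_span_eq_card hind, hW] at hmono
    simpa [Fintype.card_coe] using hmono
  have hU := key (S ∪ S') (by
    intro i hi
    rcases Finset.mem_union.1 hi with h | h
    exacts [h1 i h, h2 i h])
  have e1 : S = S ∪ S' := Finset.eq_of_subset_of_card_le Finset.subset_union_left (by omega)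
  have e2 : S' = S ∪ S' := Finset.eq_of_subset_of_card_le Finset.subset_union_right (by omega)
  rw [e1, ← e2]

lemma gauss_cast {q : ℕ} (hq : 1 < q) (hkn : k ≤ n) :
    gaussBinom q n k =
      ((∏ i ∈ range k, (q ^ n - q ^ i) : ℕ) : ℚ) /
      ((∏ i ∈ range k, (q ^ k - q ^ i) : ℕ) : ℚ) := by
  have hq0 : (q : ℚ) ≠ 0 := Nat.cast_ne_zero.mpr (by omega)
  rw [Nat.cast_prod, Nat.cast_prod]
  have cast1 : ∀ i ∈ range k, ((q ^ n - q ^ i : ℕ) : ℚ) = (q : ℚ) ^ n - (q : ℚ) ^ i := by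
    intro i hi
    have h : q ^ i ≤ q ^ n :=
      Nat.pow_le_pow_right (by omega) (le_trans (le_of_lt (mem_range.1 hi)) hkn)
    push_cast [h]; ring
  have cast2 : ∀ i ∈ range k, ((q ^ k - q ^ i : ℕ) : ℚ) = (q : ℚ) ^ k - (q : ℚ) ^ i := by
    intro i hi
    have h : q ^ i ≤ q ^ k := Nat.pow_le_pow_right (by omega) (le_of_lt (mem_range.1 hi))
    push_cast [h]; ring
  rw [Finset.prod_congr rfl cast1, Finset.prod_congr rfl cast2, ← Finset.prod_div_distrib]
  unfold gaussBinom
  refine Finset.prod_congr rfl fun i hi => ?_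
  have hik : i < k := mem_range.1 hi
  have h1 : (q : ℚ) ^ n - (q : ℚ) ^ i = (q : ℚ) ^ i * ((q : ℚ) ^ (n - i) - 1) := by
    rw [mul_sub, mul_one, ← pow_add]
    congr 2
    omega
  have h2 : (q : ℚ) ^ k - (q : ℚ) ^ i = (q : ℚ) ^ i * ((q : ℚ) ^ (k - i) - 1) := by
    rw [mul_sub, mul_one, ← pow_add]
    congr 2
    omega
  rw [h1, h2, mul_div_mul_left _ _ (pow_ne_zero i hq0)]

end Aux

/-- Transfer principle for uniform families: if a hereditary property `P` forces
every family of `k`-dimensional members of a Boolean sublattice `G_B` (`B` a basis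
of `F_q^n`) to have size at most `c·C(n,k)`, then every family of `k`-dimensional
subspaces of `F_q^n` with property `P` has size at most `c·[n choose k]_q`. -/
theorem uniform_transfer
    (F : Type*) [Field F] [Fintype F] (n k : ℕ) (hk : 1 ≤ k) (hn : 2 * k ≤ n)
    (c : ℝ) (hc0 : 0 < c) (hc1 : c ≤ 1)
    (P : Finset (Submodule F (Fin n → F)) → Prop)
    (hered : ∀ A B : Finset (Submodule F (Fin n → F)), A ⊆ B → P B → P A)
    (hbool : ∀ B : Finset (Fin n → F), B.card = n →
      LinearIndependent F (fun x : ↥(B : Set (Fin n → F)) => (x : Fin n → F)) →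
      ∀ A : Finset (Submodule F (Fin n → F)),
        (∀ W ∈ A, Module.finrank F W = k) →
        (∀ W ∈ A, ∃ U ⊆ B, Submodule.span F (U : Set (Fin n → F)) = W) →
        P A → (A.card : ℝ) ≤ c * (n.choose k : ℝ)) :
    ∀ V : Finset (Submodule F (Fin n → F)),
      (∀ W ∈ V, Module.finrank F W = k) → P V →
      (V.card : ℝ) ≤ c * ((gaussBinom (Fintype.card F) n k : ℚ) : ℝ) := by
  classical
  intro V hV hPV
  have hkn : k ≤ n := by omega
  have hq2 : 1 < Fintype.card F := Fintype.one_lt_card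
  -- reference independent tuple and extension count
  let ee : (Fin k ⊕ Fin (n - k)) ≃ Fin n := finSumFinEquiv.trans (finCongr (by omega))
  let b₀ : Fin n → (Fin n → F) := fun i => (Pi.basisFun F (Fin n)) i
  have hb₀ : LinearIndependent F b₀ := (Pi.basisFun F (Fin n)).linearIndependent
  let g₀ : Fin k → (Fin n → F) := fun j => b₀ (ee (Sum.inl j))
  have hg₀ : LinearIndependent F g₀ := hb₀.comp _ (ee.injective.comp Sum.inl_injective)
  set E := Nat.card {h : Fin (n - k) → (Fin n → F) //
      LinearIndependent F (Sum.elim g₀ h)} with hEdef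
  set I := ∏ i ∈ range k, (Fintype.card F ^ k - Fintype.card F ^ i) with hIdef
  set I' := ∏ i ∈ range k, (Fintype.card F ^ n - Fintype.card F ^ i) with hI'def
  have hIpos : 0 < I := by
    refine Finset.prod_pos fun i hi => ?_
    have : Fintype.card F ^ i < Fintype.card F ^ k :=
      Nat.pow_lt_pow_right hq2 (mem_range.1 hi)
    omega
  have hI'pos : 0 < I' := by
    refine Finset.prod_pos fun i hi => ?_
    have : Fintype.card F ^ i < Fintype.card F ^ n :=
      Nat.pow_lt_pow_right hq2 (lt_of_lt_of_le (mem_range.1 hi) hkn)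
    omega
  have hEpos : 0 < E := by
    have hne : Nonempty {h : Fin (n - k) → (Fin n → F) //
        LinearIndependent F (Sum.elim g₀ h)} := by
      refine ⟨⟨fun j => b₀ (ee (Sum.inr j)), ?_⟩⟩
      have : Sum.elim g₀ (fun j => b₀ (ee (Sum.inr j))) = b₀ ∘ ee :=
        funext fun x => by cases x <;> rfl
      rw [this]
      exact hb₀.comp _ ee.injective
    exact Nat.card_pos
  have hCpos : 0 < n.choose k := Nat.choose_pos hkn
  -- the type of ordered bases
  let Bt := {b : Fin n → (Fin n → F) // LinearIndependent F b}
  -- total number of ordered bases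
  have hBt : Fintype.card Bt = I' * E := by
    obtain ⟨S₀, -, hS₀⟩ := Finset.exists_subset_card_eq
      (show k ≤ (univ : Finset (Fin n)).card by simpa using hkn)
    have h1 : Fintype.card Bt = Nat.card {b : Fin n → (Fin n → F) //
        LinearIndependent F b ∧ ∀ i ∈ S₀, b i ∈ (⊤ : Submodule F (Fin n → F))} := by
      rw [← Nat.card_eq_fintype_card]
      exact Nat.card_congr (Equiv.subtypeEquivRight (by simp))
    have h2 : Nat.card {g : Fin k → (Fin n → F) //
        LinearIndependent F g ∧ ∀ j, g j ∈ (⊤ : Submodule F (Fin n → F))} =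
        Nat.card {g : Fin k → (Fin n → F) // LinearIndependent F g} :=
      Nat.card_congr (Equiv.subtypeEquivRight (by simp))
    rw [h1, card_cond_eq (⊤ : Submodule F (Fin n → F)) hS₀ hg₀, h2,
      card_linearIndependent (by
        simpa [Module.finrank_fintype_fun_eq_card] using hkn), hI'def, hEdef]
    simp only [Module.finrank_fintype_fun_eq_card, Fintype.card_fin]
    rw [← Fin.prod_univ_eq_prod_range
      (fun j => Fintype.card F ^ n - Fintype.card F ^ j) k]
  -- the containment condition
  let cond : Bt → Submodule F (Fin n → F) → Prop :=
    fun b W => ∃ S : Finset (Fin n), S.card = k ∧ ∀ i ∈ S, b.1 i ∈ W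
  -- number of bases containing a given W
  have hWcount : ∀ W ∈ V,
      (univ.filter (fun b : Bt => cond b W)).card = n.choose k * (I * E) := by
    intro W hWV
    have hrk := hV W hWV
    have hdecomp : univ.filter (fun b : Bt => cond b W) =
        (univ.powersetCard k).biUnion
          (fun S => univ.filter (fun b : Bt => ∀ i ∈ S, b.1 i ∈ W)) := by
      ext b
      simp only [mem_filter, mem_univ, true_and, mem_biUnion, Finset.mem_powersetCard_univ,
        cond]
    rw [hdecomp, Finset.card_biUnion]
    · have heach : ∀ S ∈ univ.powersetCard k,
          (univ.filter (fun b : Bt => ∀ i ∈ S, b.1 i ∈ W)).card = I * E := by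
        intro S hS
        have hScard : S.card = k := (Finset.mem_powersetCard_univ).1 hS
        have hsub : (univ.filter (fun b : Bt => ∀ i ∈ S, b.1 i ∈ W)).card =
            Nat.card {b : Bt // ∀ i ∈ S, b.1 i ∈ W} := by
          rw [Nat.card_eq_fintype_card, Fintype.card_subtype]
        have h2' : Nat.card {b : Bt // ∀ i ∈ S, b.1 i ∈ W} =
            Nat.card {b : Fin n → (Fin n → F) //
              LinearIndependent F b ∧ ∀ i ∈ S, b i ∈ W} :=
          Nat.card_congr (Equiv.subtypeSubtypeEquivSubtypeInter
            (fun b : Fin n → (Fin n → F) => LinearIndependent F b)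
            (fun b => ∀ i ∈ S, b i ∈ W))
        rw [hsub, h2', card_cond_eq W hScard hg₀, card_tuples_in W hrk, hIdef, hEdef]
      rw [Finset.sum_congr rfl heach, Finset.sum_const, Finset.card_powersetCard,
        Finset.card_univ, Fintype.card_fin, smul_eq_mul]
    · intro S hS S' hS' hne
      rw [Function.onFun, Finset.disjoint_left]
      intro b hb hb'
      exact hne (finset_unique_of W hrk b.2
        ((Finset.mem_powersetCard_univ).1 hS) ((Finset.mem_powersetCard_univ).1 hS')
        (by simpa using (mem_filter.1 hb).2) (by simpa using (mem_filter.1 hb').2))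
  -- double counting
  have hdouble : ∑ b : Bt, (V.filter (fun W => cond b W)).card =
      ∑ W ∈ V, (univ.filter (fun b : Bt => cond b W)).card := by
    simp_rw [Finset.card_filter]
    exact Finset.sum_comm
  have hRHS : ∑ W ∈ V, (univ.filter (fun b : Bt => cond b W)).card =
      V.card * (n.choose k * (I * E)) := by
    rw [Finset.sum_congr rfl hWcount, Finset.sum_const, smul_eq_mul]
  -- per-basis bound from hbool
  have hbound : ∀ b : Bt,
      ((V.filter (fun W => cond b W)).card : ℝ) ≤ c * (n.choose k : ℝ) := by
    intro b
    have hinj : Function.Injective b.1 := b.2.injective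
    set B : Finset (Fin n → F) := univ.image b.1 with hBdef
    have hBcard : B.card = n := by
      rw [hBdef, Finset.card_image_of_injective _ hinj, Finset.card_univ, Fintype.card_fin]
    have hBset : (B : Set (Fin n → F)) = Set.range b.1 := by
      rw [hBdef, Finset.coe_image, Finset.coe_univ, Set.image_univ]
    have hBind : LinearIndependent F (fun x : ↥(B : Set (Fin n → F)) => (x : Fin n → F)) := by
      rw [hBset]
      exact (linearIndepOn_id_range_iff hinj).mpr b.2
    refine hbool B hBcard hBind _ (fun W hW => hV W (mem_filter.1 hW).1) ?_
      (hered _ V (Finset.filter_subset _ _) hPV)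
    intro W hW
    obtain ⟨S, hScard, hSmem⟩ := (mem_filter.1 hW).2
    refine ⟨S.image b.1, ?_, ?_⟩
    · rw [hBdef]
      exact Finset.image_subset_image (Finset.subset_univ S)
    · have hUset : ((S.image b.1 : Finset (Fin n → F)) : Set (Fin n → F)) =
          Set.range (b.1 ∘ (fun x : ↥S => (x : Fin n))) := by
        rw [Finset.coe_image]
        ext y
        constructor
        · rintro ⟨x, hx, rfl⟩
          exact ⟨⟨x, hx⟩, rfl⟩
        · rintro ⟨⟨x, hx⟩, rfl⟩
          exact ⟨x, hx, rfl⟩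
      have hind : LinearIndependent F (b.1 ∘ (fun x : ↥S => (x : Fin n))) :=
        b.2.comp _ Subtype.val_injective
      have hle : Submodule.span F ((S.image b.1 : Finset (Fin n → F)) : Set (Fin n → F)) ≤ W := by
        rw [Submodule.span_le, hUset]
        rintro _ ⟨x, rfl⟩
        exact hSmem x x.2
      have hfr : Module.finrank F ↥W ≤ Module.finrank F
          ↥(Submodule.span F ((S.image b.1 : Finset (Fin n → F)) : Set (Fin n → F))) := by
        rw [hUset, finrank_span_eq_card hind, hV W (mem_filter.1 hW).1]
        simp [Fintype.card_coe, hScard]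
      exact Submodule.eq_of_le_of_finrank_le hle hfr
  -- combine
  have hmain : ((V.card * (n.choose k * (I * E)) : ℕ) : ℝ) ≤
      (Fintype.card Bt : ℝ) * (c * (n.choose k : ℝ)) := by
    rw [← hRHS, ← hdouble]
    push_cast
    calc (∑ b : Bt, ((V.filter (fun W => cond b W)).card : ℝ))
        ≤ ∑ _b : Bt, c * (n.choose k : ℝ) := Finset.sum_le_sum fun b _ => hbound b
      _ = (Fintype.card Bt : ℝ) * (c * (n.choose k : ℝ)) := by
          rw [Finset.sum_const, Finset.card_univ, nsmul_eq_mul]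
  rw [hBt] at hmain
  push_cast at hmain
  have hgauss : ((gaussBinom (Fintype.card F) n k : ℚ) : ℝ) = (I' : ℝ) / (I : ℝ) := by
    rw [gauss_cast hq2 hkn]
    push_cast
    rw [hIdef, hI'def]
    push_cast
    ring
  rw [hgauss]
  have hX : (0 : ℝ) < (n.choose k : ℝ) * ((I : ℝ) * (E : ℝ)) := by
    have h1 : (0:ℝ) < (n.choose k : ℝ) := by exact_mod_cast hCpos
    have h2 : (0:ℝ) < (I : ℝ) := by exact_mod_cast hIpos
    have h3 : (0:ℝ) < (E : ℝ) := by exact_mod_cast hEpos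
    positivity
  refine le_of_mul_le_mul_right ?_ hX
  have hI0 : (I : ℝ) ≠ 0 := by
    exact_mod_cast hIpos.ne'
  have key : c * ((I' : ℝ) / (I : ℝ)) * ((n.choose k : ℝ) * ((I : ℝ) * (E : ℝ))) =
      ((I' : ℝ) * (E : ℝ)) * (c * (n.choose k : ℝ)) := by
    field_simp
  rw [key]
  calc (V.card : ℝ) * ((n.choose k : ℝ) * ((I : ℝ) * (E : ℝ)))
      = ((V.card * (n.choose k * (I * E)) : ℕ) : ℝ) := by push_cast; ring
    _ ≤ _ := by
        convert hmain using 2 <;> push_cast <;> ring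
end
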